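/- arXiv:2305.16536 — 2 statements merged into one kernel-verified Lean document; each statement's English description precedes it below -/
import Mathlib

section
/- (Minimum-norm global minimizer of the contrastive trace loss, Lemma B.2.) Suppose p ≥ rank(P). Then W** ∈ ℝ^{p×N} is a minimum-norm global minimizer of L — i.e., it minimizes the Frobenius norm ‖W‖_F among all global minimizers W of L(W) = Tr(−2 WᵀW P + WᵀW Q WᵀW Q) — if and only if W**ᵀ W** = Q† P Q†. -/
open Matrix

/-- The contrastive trace loss `Tr(-2 WᵀW P + WᵀW Q WᵀW Q)`. -/
noncomputable def CLTraceLoss {p N : ℕ} (P Q : Matrix (Fin N) (Fin N) ℝ)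
    (W : Matrix (Fin p) (Fin N) ℝ) : ℝ :=
  Matrix.trace ((-2 : ℝ) • (Wᵀ * W * P) + Wᵀ * W * Q * (Wᵀ * W) * Q)

/-- `Ad` is the Moore–Penrose pseudoinverse of `A`. -/
def IsPseudoinverse {N : ℕ} (A Ad : Matrix (Fin N) (Fin N) ℝ) : Prop :=
  A * Ad * A = A ∧ Ad * A * Ad = Ad ∧ (A * Ad)ᵀ = A * Ad ∧ (Ad * A)ᵀ = Ad * A

lemma trace_tmul {n m : ℕ} (B : Matrix (Fin n) (Fin m) ℝ) :
    Matrix.trace (Bᵀ * B) = ∑ i, ∑ j, (B i j) ^ 2 := by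
  rw [Matrix.trace]
  simp [Matrix.mul_apply, Matrix.diag, sq]
  rw [Finset.sum_comm]

lemma trace_tmul_nonneg {n m : ℕ} (B : Matrix (Fin n) (Fin m) ℝ) :
    0 ≤ Matrix.trace (Bᵀ * B) := by
  rw [trace_tmul]; positivity

lemma trace_tmul_eq_zero {n m : ℕ} (B : Matrix (Fin n) (Fin m) ℝ)
    (h : Matrix.trace (Bᵀ * B) = 0) : B = 0 := by
  rw [trace_tmul] at h
  ext i j
  have h1 : ∀ i ∈ Finset.univ, (0:ℝ) ≤ ∑ j, (B i j)^2 := by intros; positivity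
  have := (Finset.sum_eq_zero_iff_of_nonneg h1).mp h i (Finset.mem_univ i)
  have h2 : ∀ j ∈ Finset.univ, (0:ℝ) ≤ (B i j)^2 := by intros; positivity
  have := (Finset.sum_eq_zero_iff_of_nonneg h2).mp this j (Finset.mem_univ j)
  simpa using pow_eq_zero_iff (n := 2) (by norm_num) |>.mp this

lemma trace_sandwich {N : ℕ} {Q : Matrix (Fin N) (Fin N) ℝ} (hQ : Q.PosSemidef)
    (A : Matrix (Fin N) (Fin N) ℝ) (hA : Aᵀ = A) :
    0 ≤ Matrix.trace (A * Q * A * Q) ∧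
      (Matrix.trace (A * Q * A * Q) = 0 → Q * A * Q = 0) := by
  open scoped MatrixOrder in
  set S := (CFC.sqrt Q : Matrix (Fin N) (Fin N) ℝ) with hS
  open scoped MatrixOrder in
  have hSS : S * S = Q := CFC.sqrt_mul_sqrt_self Q hQ.nonneg
  have hSt : Sᵀ = S := by
    rw [← Matrix.conjTranspose_eq_transpose_of_trivial]
    open scoped MatrixOrder in
    exact (CFC.sqrt_nonneg Q).posSemidef.1
  have hsym : (S * A * S)ᵀ = S * A * S := by
    simp only [Matrix.transpose_mul, hSt, hA, mul_assoc]
  have key : Matrix.trace (A * Q * A * Q) = Matrix.trace ((S * A * S)ᵀ * (S * A * S)) := by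
    rw [hsym, ← hSS]
    rw [show A * (S * S) * A * (S * S) = (A * (S * S) * A * S) * S from by noncomm_ring,
      Matrix.trace_mul_comm,
      show S * (A * (S * S) * A * S) = (S * A * S) * (S * A * S) from by noncomm_ring]
  constructor
  · rw [key]; exact trace_tmul_nonneg _
  · intro h
    rw [key] at h
    have hz : S * A * S = 0 := trace_tmul_eq_zero _ h
    calc Q * A * Q = S * (S * A * S) * S := by rw [← hSS]; noncomm_ring
      _ = 0 := by rw [hz]; noncomm_ring

lemma exists_factor {N p : ℕ} (A : Matrix (Fin N) (Fin N) ℝ) (hA : A.PosSemidef)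
    (hrank : A.rank ≤ p) : ∃ W : Matrix (Fin p) (Fin N) ℝ, Wᵀ * W = A := by
  classical
  have hH := hA.1
  set U : Matrix (Fin N) (Fin N) ℝ := (hH.eigenvectorUnitary : Matrix (Fin N) (Fin N) ℝ) with hU
  have hspec : A = U * Matrix.diagonal hH.eigenvalues * Uᵀ := by
    have := hH.spectral_theorem
    simpa [hU, Matrix.star_eq_conjTranspose, Matrix.conjTranspose_eq_transpose_of_trivial,
      Function.comp] using this
  set B : Matrix (Fin N) (Fin N) ℝ :=
    Matrix.diagonal (fun i => Real.sqrt (hH.eigenvalues i)) * Uᵀ with hB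
  have hBB : Bᵀ * B = A := by
    rw [hB, Matrix.transpose_mul, Matrix.transpose_transpose, Matrix.diagonal_transpose,
      mul_assoc, ← mul_assoc (Matrix.diagonal _), Matrix.diagonal_mul_diagonal, ← mul_assoc]
    have : (fun i => Real.sqrt (hH.eigenvalues i) * Real.sqrt (hH.eigenvalues i))
        = hH.eigenvalues := funext fun i => Real.mul_self_sqrt (hA.eigenvalues_nonneg i)
    rw [this]; exact hspec.symm
  have hrow : ∀ i j, hH.eigenvalues i = 0 → B i j = 0 := by
    intro i j h
    simp [hB, Matrix.mul_apply, Matrix.diagonal_apply, h]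
  have hcard : Fintype.card {i // hH.eigenvalues i ≠ 0} ≤ p := by
    have h2 := hH.rank_eq_card_non_zero_eigs
    rw [← h2]; simpa using hrank
  obtain ⟨e⟩ : Nonempty ({i // hH.eigenvalues i ≠ 0} ↪ Fin p) :=
    Function.Embedding.nonempty_of_card_le (by simpa using hcard)
  refine ⟨fun k j => ∑ i : {i // hH.eigenvalues i ≠ 0}, if e i = k then B i.1 j else 0, ?_⟩
  refine Eq.trans ?_ hBB
  ext a b
  simp only [Matrix.mul_apply, Matrix.transpose_apply]
  have step1 : ∀ x : Fin p,
      (∑ i : {i // hH.eigenvalues i ≠ 0}, if e i = x then B i.1 a else 0) *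
        (∑ i : {i // hH.eigenvalues i ≠ 0}, if e i = x then B i.1 b else 0)
      = ∑ i : {i // hH.eigenvalues i ≠ 0}, ∑ i' : {i // hH.eigenvalues i ≠ 0},
          (if e i = x then B i.1 a else 0) * (if e i' = x then B i'.1 b else 0) := by
    intro x; rw [Finset.sum_mul_sum]
  calc (∑ x : Fin p,
        (∑ i : {i // hH.eigenvalues i ≠ 0}, if e i = x then B i.1 a else 0) *
          (∑ i : {i // hH.eigenvalues i ≠ 0}, if e i = x then B i.1 b else 0))
      = ∑ x : Fin p, ∑ i : {i // hH.eigenvalues i ≠ 0}, ∑ i' : {i // hH.eigenvalues i ≠ 0},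
          (if e i = x then B i.1 a else 0) * (if e i' = x then B i'.1 b else 0) := by
        exact Finset.sum_congr rfl fun x _ => step1 x
    _ = ∑ i : {i // hH.eigenvalues i ≠ 0}, ∑ i' : {i // hH.eigenvalues i ≠ 0},
          ∑ x : Fin p, (if e i = x then B i.1 a else 0) * (if e i' = x then B i'.1 b else 0) := by
        rw [Finset.sum_comm]
        exact Finset.sum_congr rfl fun i _ => Finset.sum_comm
    _ = ∑ i : {i // hH.eigenvalues i ≠ 0}, B i.1 a * B i.1 b := by
        refine Finset.sum_congr rfl fun i _ => ?_
        rw [show (∑ i' : {i // hH.eigenvalues i ≠ 0},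
            ∑ x : Fin p, (if e i = x then B i.1 a else 0) * (if e i' = x then B i'.1 b else 0))
          = ∑ i' : {i // hH.eigenvalues i ≠ 0},
            (if i' = i then B i.1 a * B i'.1 b else 0) from ?_]
        · simp
        refine Finset.sum_congr rfl fun i' _ => ?_
        rw [Finset.sum_eq_single (e i)]
        · by_cases h : i' = i
          · subst h; simp
          · have : e i' ≠ e i := fun hc => h (e.injective hc)
            simp [h, this]
        · intro x _ hx
          simp [Ne.symm hx]
        · simp
    _ = ∑ x : Fin N, B x a * B x b := by
        have h1 : (∑ i : {i // hH.eigenvalues i ≠ 0}, B i.1 a * B i.1 b)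
            = ∑ i ∈ Finset.univ.filter (fun i => hH.eigenvalues i ≠ 0), B i a * B i b :=
          (Finset.sum_subtype (Finset.univ.filter (fun i => hH.eigenvalues i ≠ 0))
            (fun x => by simp) (fun i => B i a * B i b)).symm
        rw [h1]
        refine Finset.sum_subset (Finset.filter_subset _ _) ?_
        intro x _ hx
        have hz : hH.eigenvalues x = 0 := by simpa using hx
        rw [hrow x a hz]; ring

lemma pinv_unique {N : ℕ} (A B C : Matrix (Fin N) (Fin N) ℝ)
    (hB : IsPseudoinverse A B) (hC : IsPseudoinverse A C) : B = C := by
  obtain ⟨b1, b2, b3, b4⟩ := hB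
  obtain ⟨c1, c2, c3, c4⟩ := hC
  have hAB : A * B = A * C := by
    calc A * B = (A * C * A) * B := by rw [c1]
      _ = (A * C) * (A * B) := by noncomm_ring
      _ = (A * C)ᵀ * (A * B)ᵀ := by rw [c3, b3]
      _ = ((A * B) * (A * C))ᵀ := (Matrix.transpose_mul _ _).symm
      _ = ((A * B * A) * C)ᵀ := by noncomm_ring
      _ = (A * C)ᵀ := by rw [b1]
      _ = A * C := c3
  have hBA : B * A = C * A := by
    calc B * A = B * (A * C * A) := by rw [c1]
      _ = (B * A) * (C * A) := by noncomm_ring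
      _ = (B * A)ᵀ * (C * A)ᵀ := by rw [c4, b4]
      _ = ((C * A) * (B * A))ᵀ := (Matrix.transpose_mul _ _).symm
      _ = (C * (A * B * A))ᵀ := by noncomm_ring
      _ = (C * A)ᵀ := by rw [b1]
      _ = C * A := c4
  calc B = B * A * B := b2.symm
    _ = B * (A * C) := by rw [mul_assoc, hAB]
    _ = (B * A) * C := by rw [mul_assoc]
    _ = (C * A) * C := by rw [hBA]
    _ = C := c2

lemma pinv_symm {N : ℕ} (Q Qd : Matrix (Fin N) (Fin N) ℝ) (hQt : Qᵀ = Q)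
    (h : IsPseudoinverse Q Qd) : Qdᵀ = Qd := by
  obtain ⟨h1, h2, h3, h4⟩ := h
  have hQdQ : Q * Qdᵀ = Qd * Q := by
    calc Q * Qdᵀ = Qᵀ * Qdᵀ := by rw [hQt]
      _ = (Qd * Q)ᵀ := (Matrix.transpose_mul _ _).symm
      _ = Qd * Q := h4
  have hQQd : Qdᵀ * Q = Q * Qd := by
    calc Qdᵀ * Q = Qdᵀ * Qᵀ := by rw [hQt]
      _ = (Q * Qd)ᵀ := (Matrix.transpose_mul _ _).symm
      _ = Q * Qd := h3
  refine pinv_unique Q Qdᵀ Qd ⟨?_, ?_, ?_, ?_⟩ ⟨h1, h2, h3, h4⟩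
  · have e : (Q * Qdᵀ * Q)ᵀ = Q := by
      simp only [Matrix.transpose_mul, Matrix.transpose_transpose, hQt]
      rw [← mul_assoc]; exact h1
    have e2 := congrArg Matrix.transpose e
    rw [Matrix.transpose_transpose] at e2
    rw [e2, hQt]
  · have e : (Qdᵀ * Q * Qdᵀ)ᵀ = Qd := by
      simp only [Matrix.transpose_mul, Matrix.transpose_transpose, hQt]
      rw [← mul_assoc]; exact h2
    have e2 := congrArg Matrix.transpose e
    rw [Matrix.transpose_transpose] at e2
    rw [e2]
  · rw [hQdQ]; exact h4
  · rw [hQQd]; exact h3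

theorem stmt_6 (N p : ℕ)
    (P Q : Matrix (Fin N) (Fin N) ℝ) (hP : P.PosSemidef) (hQ : Q.PosSemidef)
    (hcol : LinearMap.range P.mulVecLin ≤ LinearMap.range Q.mulVecLin)
    (hp : P.rank ≤ p)
    (Qd : Matrix (Fin N) (Fin N) ℝ) (hQd : IsPseudoinverse Q Qd)
    (Wss : Matrix (Fin p) (Fin N) ℝ) :
    ((∀ W : Matrix (Fin p) (Fin N) ℝ, CLTraceLoss P Q Wss ≤ CLTraceLoss P Q W) ∧
      (∀ W : Matrix (Fin p) (Fin N) ℝ,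
        (∀ W' : Matrix (Fin p) (Fin N) ℝ, CLTraceLoss P Q W ≤ CLTraceLoss P Q W') →
        Real.sqrt (∑ i, ∑ j, (Wss i j) ^ 2) ≤ Real.sqrt (∑ i, ∑ j, (W i j) ^ 2)))
      ↔ Wssᵀ * Wss = Qd * P * Qd := by
  obtain ⟨h1, h2, h3, h4⟩ := hQd
  have hPt : Pᵀ = P := by
    rw [← Matrix.conjTranspose_eq_transpose_of_trivial]; exact hP.1
  have hQt : Qᵀ = Q := by
    rw [← Matrix.conjTranspose_eq_transpose_of_trivial]; exact hQ.1
  have hQdt : Qdᵀ = Qd := pinv_symm Q Qd hQt ⟨h1, h2, h3, h4⟩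
  have hQQdP : Q * Qd * P = P := by
    have hv : ∀ x : Fin N → ℝ, (Q * Qd * P) *ᵥ x = P *ᵥ x := by
      intro x
      obtain ⟨y, hy⟩ := hcol (LinearMap.mem_range_self P.mulVecLin x)
      simp only [Matrix.mulVecLin_apply] at hy
      calc (Q * Qd * P) *ᵥ x = Q *ᵥ (Qd *ᵥ (P *ᵥ x)) := by
            simp [← Matrix.mulVec_mulVec]
        _ = Q *ᵥ (Qd *ᵥ (Q *ᵥ y)) := by rw [hy]
        _ = (Q * Qd * Q) *ᵥ y := by simp [← Matrix.mulVec_mulVec]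
        _ = Q *ᵥ y := by rw [h1]
        _ = P *ᵥ x := hy
    ext i j
    have := congrFun (hv (Pi.single j 1)) i
    simpa [Matrix.mulVec_single] using this
  have hPQdQ : P * Qd * Q = P := by
    have e : (P * Qd * Q)ᵀ = P := by
      simp only [Matrix.transpose_mul, hQt, hQdt, hPt]
      rw [← mul_assoc]; exact hQQdP
    have e2 := congrArg Matrix.transpose e
    rw [Matrix.transpose_transpose] at e2
    rw [e2, hPt]
  set X := Qd * P * Qd with hX
  have hXt : Xᵀ = X := by
    rw [hX]
    simp only [Matrix.transpose_mul, hQdt, hPt]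
    rw [← mul_assoc]
  have hQXQ : Q * X * Q = P := by
    calc Q * X * Q = (Q * Qd * P) * (Qd * Q) := by rw [hX]; noncomm_ring
      _ = P * (Qd * Q) := by rw [hQQdP]
      _ = P := by rw [← mul_assoc, hPQdQ]
  have hXpsd : X.PosSemidef := by
    have := hP.conjTranspose_mul_mul_same Qd
    rw [Matrix.conjTranspose_eq_transpose_of_trivial, hQdt] at this
    exact this
  have hXrank : X.rank ≤ p := by
    refine le_trans (le_trans ?_ (Matrix.rank_mul_le_left P Qd)) hp
    rw [hX, mul_assoc]
    exact Matrix.rank_mul_le_right Qd (P * Qd)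
  set c := Matrix.trace (X * Q * X * Q) with hc
  have key : ∀ W : Matrix (Fin p) (Fin N) ℝ,
      CLTraceLoss P Q W + c
        = Matrix.trace ((Wᵀ * W - X) * Q * (Wᵀ * W - X) * Q) := by
    intro W
    set M := Wᵀ * W with hM
    have expand : (M - X) * Q * (M - X) * Q
        = M * Q * M * Q - M * (Q * X * Q) - X * Q * M * Q + X * Q * X * Q := by
      noncomm_ring
    rw [expand, hQXQ]
    rw [Matrix.trace_add, Matrix.trace_sub, Matrix.trace_sub]
    have e1 : Matrix.trace (X * Q * M * Q) = Matrix.trace (M * P) := by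
      rw [Matrix.trace_mul_comm,
        show Q * (X * Q * M) = (Q * X * Q) * M from by noncomm_ring, hQXQ,
        Matrix.trace_mul_comm]
    rw [e1]
    simp only [CLTraceLoss, Matrix.trace_add, Matrix.trace_smul, smul_eq_mul, ← hM]
    ring
  have hsub : ∀ W : Matrix (Fin p) (Fin N) ℝ, (Wᵀ * W - X)ᵀ = Wᵀ * W - X := by
    intro W
    rw [Matrix.transpose_sub, Matrix.transpose_mul, Matrix.transpose_transpose, hXt]
  have hlb : ∀ W : Matrix (Fin p) (Fin N) ℝ, -c ≤ CLTraceLoss P Q W := by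
    intro W
    have h0 := (trace_sandwich hQ _ (hsub W)).1
    have k := key W
    linarith
  have heq : ∀ W : Matrix (Fin p) (Fin N) ℝ,
      CLTraceLoss P Q W = -c → Q * (Wᵀ * W) * Q = P := by
    intro W hW
    have k := key W
    have h0 : Matrix.trace ((Wᵀ * W - X) * Q * (Wᵀ * W - X) * Q) = 0 := by linarith
    have hz := (trace_sandwich hQ _ (hsub W)).2 h0
    have : Q * (Wᵀ * W) * Q - Q * X * Q = 0 := by
      rw [← hz]; noncomm_ring
    rw [hQXQ] at this
    exact sub_eq_zero.mp this
  have hXloss : ∀ W : Matrix (Fin p) (Fin N) ℝ, Wᵀ * W = X →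
      CLTraceLoss P Q W = -c := by
    intro W hW
    have k := key W
    rw [hW, sub_self, Matrix.zero_mul, Matrix.zero_mul, Matrix.zero_mul,
      Matrix.trace_zero] at k
    linarith
  -- projection machinery
  set Pi := Q * Qd with hPi
  set R := (1 : Matrix (Fin N) (Fin N) ℝ) - Pi with hR
  have hcomm : Q * Qd = Qd * Q := by
    rw [← h4, Matrix.transpose_mul, hQt, hQdt]
  have hPi2 : Pi * Pi = Pi := by
    rw [hPi, show Q * Qd * (Q * Qd) = (Q * Qd * Q) * Qd from by noncomm_ring, h1]
  have hRt : Rᵀ = R := by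
    rw [hR, Matrix.transpose_sub, Matrix.transpose_one, hPi, h3]
  have hRR : R * R = R := by
    rw [hR]
    rw [Matrix.sub_mul, Matrix.mul_sub, Matrix.mul_sub, hPi2]
    noncomm_ring
  have hPiMPi : ∀ W : Matrix (Fin p) (Fin N) ℝ, Q * (Wᵀ * W) * Q = P →
      Pi * (Wᵀ * W) * Pi = X := by
    intro W hW
    calc Pi * (Wᵀ * W) * Pi = (Qd * Q) * (Wᵀ * W) * (Q * Qd) := by
          rw [hPi, hcomm]
      _ = Qd * (Q * (Wᵀ * W) * Q) * Qd := by noncomm_ring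
      _ = X := by rw [hW, hX]
  have htracedec : ∀ W : Matrix (Fin p) (Fin N) ℝ, Q * (Wᵀ * W) * Q = P →
      Matrix.trace (Wᵀ * W)
        = Matrix.trace X + Matrix.trace ((W * R)ᵀ * (W * R)) := by
    intro W hW
    have hMP : Matrix.trace ((Wᵀ * W) * Pi) = Matrix.trace X := by
      rw [← hPi2, show (Wᵀ * W) * (Pi * Pi) = ((Wᵀ * W) * Pi) * Pi from by noncomm_ring,
        Matrix.trace_mul_comm, show Pi * (Wᵀ * W * Pi) = Pi * (Wᵀ * W) * Pi from by
          noncomm_ring, hPiMPi W hW]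
    have hMR : Matrix.trace ((W * R)ᵀ * (W * R)) = Matrix.trace ((Wᵀ * W) * R) := by
      have hassoc : (W * R)ᵀ * (W * R) = Rᵀ * (Wᵀ * W) * R := by
        rw [Matrix.transpose_mul]; simp only [Matrix.mul_assoc]
      rw [hassoc, hRt,
        Matrix.trace_mul_comm, show R * (R * (Wᵀ * W)) = (R * R) * (Wᵀ * W) from by
          noncomm_ring, hRR, Matrix.trace_mul_comm]
    rw [hMR, ← hMP]
    have : (Wᵀ * W) = (Wᵀ * W) * Pi + (Wᵀ * W) * R := by
      rw [hR, Matrix.mul_sub, Matrix.mul_one]; noncomm_ring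
    conv_lhs => rw [this]
    rw [Matrix.trace_add]
  have hWRzero : ∀ W : Matrix (Fin p) (Fin N) ℝ, Q * (Wᵀ * W) * Q = P →
      W * R = 0 → Wᵀ * W = X := by
    intro W hW hWR
    have hWPi : W = W * Pi := by
      have : W * R = W - W * Pi := by rw [hR, Matrix.mul_sub, Matrix.mul_one]
      rw [this] at hWR
      exact sub_eq_zero.mp hWR
    calc Wᵀ * W = (W * Pi)ᵀ * (W * Pi) := by rw [← hWPi]
      _ = Pi * (Wᵀ * W) * Pi := by
          rw [Matrix.transpose_mul, h3]; simp only [Matrix.mul_assoc]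
      _ = X := hPiMPi W hW
  have hsum : ∀ W : Matrix (Fin p) (Fin N) ℝ,
      (∑ i, ∑ j, (W i j) ^ 2) = Matrix.trace (Wᵀ * W) :=
    fun W => (trace_tmul W).symm
  constructor
  · -- forward
    rintro ⟨hmin, hnorm⟩
    obtain ⟨W₀, hW₀⟩ := exists_factor X hXpsd hXrank
    have hW₀loss : CLTraceLoss P Q W₀ = -c := hXloss W₀ hW₀
    have hW₀min : ∀ W' : Matrix (Fin p) (Fin N) ℝ,
        CLTraceLoss P Q W₀ ≤ CLTraceLoss P Q W' := by
      intro W'; rw [hW₀loss]; exact hlb W'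
    have hMss : Q * (Wssᵀ * Wss) * Q = P := by
      refine heq Wss (le_antisymm ?_ (hlb Wss))
      calc CLTraceLoss P Q Wss ≤ CLTraceLoss P Q W₀ := hmin W₀
        _ = -c := hW₀loss
    have hdec := htracedec Wss hMss
    have hle : Matrix.trace (Wssᵀ * Wss) ≤ Matrix.trace X := by
      have hs := hnorm W₀ hW₀min
      rw [hsum Wss, hsum W₀, hW₀] at hs
      by_contra hgt
      push_neg at hgt
      have h0X : (0:ℝ) ≤ Matrix.trace X := by
        rw [← hW₀]; exact trace_tmul_nonneg W₀
      exact absurd hs (not_le.mpr (Real.sqrt_lt_sqrt h0X hgt))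
    have hzero : Matrix.trace ((Wss * R)ᵀ * (Wss * R)) = 0 :=
      le_antisymm (by linarith) (trace_tmul_nonneg _)
    exact hWRzero Wss hMss (trace_tmul_eq_zero _ hzero)
  · -- backward
    intro hWss
    have hWssloss : CLTraceLoss P Q Wss = -c := hXloss Wss hWss
    constructor
    · intro W; rw [hWssloss]; exact hlb W
    · intro W hWmin
      have hW : Q * (Wᵀ * W) * Q = P := by
        refine heq W (le_antisymm ?_ (hlb W))
        calc CLTraceLoss P Q W ≤ CLTraceLoss P Q Wss := hWmin Wss
          _ = -c := hWssloss
      have hdec := htracedec W hW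
      have hge : Matrix.trace (Wssᵀ * Wss) ≤ Matrix.trace (Wᵀ * W) := by
        rw [hWss]
        have := trace_tmul_nonneg (W * R)
        linarith
      exact Real.sqrt_le_sqrt (by rw [hsum Wss, hsum W]; exact hge)
end

section
/- (Minimum value of the contrastive trace loss.) The matrix Q† P is diagonalizable with nonnegative real eigenvalues; let λ_1 ≥ λ_2 ≥ … ≥ λ_N ≥ 0 be these eigenvalues listed with algebraic multiplicity. Then for every p ≥ 1, the minimum of L(W) = Tr(−2 WᵀW P + WᵀW Q WᵀW Q) over W ∈ ℝ^{p×N} is attained and equals −(λ_1² + λ_2² + … + λ_{min(p,N)}²). -/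
open Matrix Polynomial Finset

namespace CLAux

variable {N : ℕ}

lemma pinv_unique (A B C : Matrix (Fin N) (Fin N) ℝ)
    (hB1 : A * B * A = A) (hB2 : B * A * B = B) (hB3 : (A * B)ᵀ = A * B) (hB4 : (B * A)ᵀ = B * A)
    (hC1 : A * C * A = A) (hC2 : C * A * C = C) (hC3 : (A * C)ᵀ = A * C) (hC4 : (C * A)ᵀ = C * A) :
    B = C := by
  have h1 : A * B = A * C := by
    calc A * B = ((A * C * A) * B)ᵀ := by rw [hC1, hB3]
    _ = (A * B)ᵀ * (A * C)ᵀ := by simp [transpose_mul, mul_assoc]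
    _ = (A * B) * (A * C) := by rw [hB3, hC3]
    _ = (A * B * A) * C := by simp [mul_assoc]
    _ = A * C := by rw [hB1]
  have h2 : B * A = C * A := by
    calc B * A = (B * (A * C * A))ᵀ := by rw [hC1, hB4]
    _ = (C * A)ᵀ * (B * A)ᵀ := by simp [transpose_mul, mul_assoc]
    _ = (C * A) * (B * A) := by rw [hB4, hC4]
    _ = C * (A * B * A) := by simp [mul_assoc]
    _ = C * A := by rw [hB1]
  calc B = B * A * B := hB2.symm
  _ = C * A * B := by rw [h2]
  _ = C * (A * B) := by rw [mul_assoc]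
  _ = C * (A * C) := by rw [h1]
  _ = C := by rw [← mul_assoc]; exact hC2

lemma sum_weight_le {p : ℕ} (a : Fin N → ℝ) (ha : Antitone a) (h0 : ∀ i, 0 ≤ a i)
    (t : Fin N → ℝ) (ht0 : ∀ i, 0 ≤ t i) (ht1 : ∀ i, t i ≤ 1) (hts : ∑ i, t i ≤ (p : ℝ)) :
    ∑ i, t i * a i ≤ ∑ i : Fin N, if (i : ℕ) < p then a i else 0 := by
  by_cases hpN : N ≤ p
  · have : ∀ i : Fin N, (if (i : ℕ) < p then a i else 0) = a i := by
      intro i; rw [if_pos (lt_of_lt_of_le i.2 hpN)]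
    rw [Finset.sum_congr rfl fun i _ => this i]
    apply Finset.sum_le_sum
    intro i _
    calc t i * a i ≤ 1 * a i := mul_le_mul_of_nonneg_right (ht1 i) (h0 i)
    _ = a i := one_mul _
  · push_neg at hpN
    set pF : Fin N := ⟨p, hpN⟩ with hpF
    set c := a pF with hc
    have hc0 : 0 ≤ c := h0 _
    have key : ∀ i : Fin N, t i * a i - (if (i : ℕ) < p then a i else 0) ≤
        (t i - (if (i : ℕ) < p then 1 else 0)) * c := by
      intro i
      by_cases hi : (i : ℕ) < p
      · rw [if_pos hi, if_pos hi]
        have hai : c ≤ a i := ha (by simp [hpF, Fin.le_def, le_of_lt hi])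
        nlinarith [ht1 i, ht0 i]
      · rw [if_neg hi, if_neg hi]
        have hai : a i ≤ c := ha (by simp [hpF, Fin.le_def]; omega)
        nlinarith [ht0 i]
    have hcount : ∑ i : Fin N, (if (i : ℕ) < p then (1 : ℝ) else 0) = p := by
      rw [Finset.sum_boole]
      have : (univ.filter fun i : Fin N => (i : ℕ) < p) = Finset.Iio pF := by
        ext i; simp [Finset.mem_Iio, Fin.lt_def, hpF]
      rw [this, Fin.card_Iio]
    have h1 : ∑ i, (t i * a i - (if (i : ℕ) < p then a i else 0)) ≤
        ∑ i, (t i - (if (i : ℕ) < p then 1 else 0)) * c := Finset.sum_le_sum fun i _ => key i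
    rw [Finset.sum_sub_distrib] at h1
    have h2 : ∑ i, (t i - (if (i : ℕ) < p then 1 else 0)) * c ≤ 0 := by
      have : ∑ i, (t i - (if (i : ℕ) < p then 1 else 0)) * c
          = (∑ i, t i - ∑ i : Fin N, (if (i : ℕ) < p then (1:ℝ) else 0)) * c := by
        rw [← Finset.sum_sub_distrib, Finset.sum_mul]
      rw [this, hcount]
      exact mul_nonpos_of_nonpos_of_nonneg (by linarith) hc0
    linarith

lemma sq_sum_le (c b : Fin N → ℝ) (hc : ∀ i, 0 ≤ c i) (hc1 : ∑ i, c i = 1) :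
    (∑ i, c i * b i) ^ 2 ≤ ∑ i, c i * b i ^ 2 := by
  have := Finset.sum_mul_sq_le_sq_mul_sq Finset.univ (fun i => Real.sqrt (c i))
    (fun i => Real.sqrt (c i) * b i)
  have e1 : ∀ i : Fin N, Real.sqrt (c i) * (Real.sqrt (c i) * b i) = c i * b i := by
    intro i; rw [← mul_assoc, Real.mul_self_sqrt (hc i)]
  have e2 : ∀ i : Fin N, Real.sqrt (c i) ^ 2 = c i := fun i => Real.sq_sqrt (hc i)
  have e3 : ∀ i : Fin N, (Real.sqrt (c i) * b i) ^ 2 = c i * b i ^ 2 := by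
    intro i; rw [mul_pow, e2]
  rw [Finset.sum_congr rfl fun i _ => e1 i] at this
  rw [Finset.sum_congr rfl fun i _ => e2 i] at this
  rw [Finset.sum_congr rfl fun i _ => e3 i] at this
  rw [hc1, one_mul] at this
  exact this

lemma charpoly_conj (S A : Matrix (Fin N) (Fin N) ℝ) (hS : IsUnit S.det) :
    (S * A * S⁻¹).charpoly = A.charpoly := by
  have hSS : S * S⁻¹ = 1 := mul_nonsing_inv S hS
  have hmapSS : (S.map (C : ℝ → ℝ[X])) * (S⁻¹.map C) = 1 := by
    rw [← Matrix.map_mul, hSS]; simp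
  have hcomm : ∀ M : Matrix (Fin N) (Fin N) ℝ[X],
      Matrix.scalar (Fin N) (X : ℝ[X]) * M = M * Matrix.scalar (Fin N) (X : ℝ[X]) :=
    fun M => (Matrix.scalar_commute (X : ℝ[X]) (fun r => Commute.all _ _) M).eq
  have key : charmatrix (S * A * S⁻¹) = (S.map C) * charmatrix A * (S⁻¹.map C) := by
    unfold charmatrix
    rw [mul_sub, sub_mul]
    congr 1
    · rw [← hcomm, mul_assoc, hmapSS, mul_one]
    · rw [RingHom.mapMatrix_apply, RingHom.mapMatrix_apply, Matrix.map_mul, Matrix.map_mul]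
  rw [charpoly, charpoly, key, det_mul, det_mul]
  have h1 : (S.map (C : ℝ → ℝ[X])).det * (S⁻¹.map C).det = 1 := by
    rw [← det_mul, hmapSS, det_one]
  calc (S.map (C : ℝ → ℝ[X])).det * (charmatrix A).det * (S⁻¹.map C).det
      = (S.map (C : ℝ → ℝ[X])).det * (S⁻¹.map C).det * (charmatrix A).det := by ring
  _ = (charmatrix A).det := by rw [h1, one_mul]

lemma charpoly_diag (a : Fin N → ℝ) :
    (Matrix.diagonal a).charpoly = ∏ i : Fin N, (X - C (a i)) := by
  rw [Matrix.charpoly_of_upperTriangular _ (Matrix.blockTriangular_diagonal a)]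
  simp

lemma multiset_eq_of_charpoly (a b : Fin N → ℝ)
    (h : (Matrix.diagonal a).charpoly = (Matrix.diagonal b).charpoly) :
    Finset.univ.val.map a = Finset.univ.val.map b := by
  rw [charpoly_diag, charpoly_diag] at h
  have ha : (∏ i : Fin N, (X - C (a i))) = ((Finset.univ.val.map a).map fun r => X - C r).prod := by
    rw [Multiset.map_map]; rfl
  have hb : (∏ i : Fin N, (X - C (b i))) = ((Finset.univ.val.map b).map fun r => X - C r).prod := by
    rw [Multiset.map_map]; rfl
  have := congrArg Polynomial.roots (ha ▸ hb ▸ h)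
  rwa [roots_multiset_prod_X_sub_C, roots_multiset_prod_X_sub_C] at this

lemma monotone_eq_of_multiset (f g : Fin N → ℝ) (hf : Monotone f) (hg : Monotone g)
    (h : Finset.univ.val.map f = Finset.univ.val.map g) : f = g := by
  have hf' : (List.ofFn f : Multiset ℝ) = Finset.univ.val.map f := by
    rw [List.ofFn_eq_map]; rfl
  have hg' : (List.ofFn g : Multiset ℝ) = Finset.univ.val.map g := by
    rw [List.ofFn_eq_map]; rfl
  have hperm : (List.ofFn f).Perm (List.ofFn g) := by
    rw [← Multiset.coe_eq_coe, hf', hg', h]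
  have := List.Perm.eq_of_sortedLE (List.sortedLE_ofFn_iff.mpr hf)
    (List.sortedLE_ofFn_iff.mpr hg) hperm
  exact List.ofFn_injective this

lemma multiset_comp_perm (f : Fin N → ℝ) (σ : Equiv.Perm (Fin N)) :
    Finset.univ.val.map (f ∘ σ) = Finset.univ.val.map f := by
  have h1 : Finset.univ.val.map (f ∘ σ) = (Finset.univ.val.map (σ : Fin N → Fin N)).map f := by
    rw [Multiset.map_map]
  rw [h1]
  congr 1
  have h2 := congrArg Finset.val (Finset.map_univ_equiv σ)
  rw [Finset.map_val] at h2
  simpa using h2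

lemma exists_perm_comp (lam eig : Fin N → ℝ) (hlam : Antitone lam)
    (h : Finset.univ.val.map lam = Finset.univ.val.map eig) :
    ∃ τ : Equiv.Perm (Fin N), lam ∘ τ = eig := by
  classical
  set σ : Equiv.Perm (Fin N) := Tuple.sort eig with hσ
  have h1 : Monotone (eig ∘ σ) := Tuple.monotone_sort eig
  have h2 : Monotone (fun i => lam (Fin.rev i)) := by
    intro i j hij
    exact hlam (Fin.rev_le_rev.mpr hij)
  have hmul : Finset.univ.val.map (eig ∘ σ) = Finset.univ.val.map (fun i => lam (Fin.rev i)) := by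
    rw [multiset_comp_perm eig σ, ← h]
    have : (fun i => lam (Fin.rev i)) = lam ∘ (Fin.revPerm : Equiv.Perm (Fin N)) := rfl
    rw [this, multiset_comp_perm lam Fin.revPerm]
  have heq : eig ∘ σ = fun i => lam (Fin.rev i) :=
    monotone_eq_of_multiset _ _ h1 h2 hmul
  refine ⟨(σ.symm.trans (Fin.revPerm : Equiv.Perm (Fin N))), ?_⟩
  funext i
  have := congrFun heq (σ.symm i)
  simp only [Function.comp_apply, Equiv.apply_symm_apply] at this
  simpa [Equiv.trans_apply] using this.symm

lemma UDU_mul (U : Matrix (Fin N) (Fin N) ℝ) (hU : Uᵀ * U = 1) (a b : Fin N → ℝ) :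
    (U * diagonal a * Uᵀ) * (U * diagonal b * Uᵀ) = U * diagonal (fun i => a i * b i) * Uᵀ := by
  have : (U * diagonal a * Uᵀ) * (U * diagonal b * Uᵀ)
      = U * (diagonal a * (Uᵀ * U) * diagonal b) * Uᵀ := by
    simp only [mul_assoc]
  rw [this, hU, mul_one, diagonal_mul_diagonal]

lemma UDU_T (U : Matrix (Fin N) (Fin N) ℝ) (a : Fin N → ℝ) :
    (U * diagonal a * Uᵀ)ᵀ = U * diagonal a * Uᵀ := by
  rw [transpose_mul, transpose_mul, transpose_transpose, diagonal_transpose, mul_assoc]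

lemma UDU_trace (U : Matrix (Fin N) (Fin N) ℝ) (hU : Uᵀ * U = 1) (a : Fin N → ℝ) :
    trace (U * diagonal a * Uᵀ) = ∑ i, a i := by
  rw [trace_mul_cycle, hU, one_mul, trace_diagonal]

lemma trace_diag_mul (a : Fin N → ℝ) (B : Matrix (Fin N) (Fin N) ℝ) :
    trace (diagonal a * B) = ∑ j, a j * B j j := by
  rw [Matrix.trace]
  apply Finset.sum_congr rfl
  intro j _
  rw [Matrix.diag_apply, Matrix.mul_apply]
  rw [Finset.sum_eq_single j]
  · rw [Matrix.diagonal_apply_eq]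
  · intro b _ hb; rw [Matrix.diagonal_apply_ne _ (Ne.symm hb), zero_mul]
  · intro h; exact absurd (Finset.mem_univ j) h

/-- Spectral package over ℝ. -/
lemma spec_real (A : Matrix (Fin N) (Fin N) ℝ) (hA : A.IsHermitian) :
    A = (hA.eigenvectorUnitary : Matrix (Fin N) (Fin N) ℝ) * diagonal hA.eigenvalues *
        (hA.eigenvectorUnitary : Matrix (Fin N) (Fin N) ℝ)ᵀ ∧
    ((hA.eigenvectorUnitary : Matrix (Fin N) (Fin N) ℝ))ᵀ *
        (hA.eigenvectorUnitary : Matrix (Fin N) (Fin N) ℝ) = 1 ∧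
    (hA.eigenvectorUnitary : Matrix (Fin N) (Fin N) ℝ) *
        ((hA.eigenvectorUnitary : Matrix (Fin N) (Fin N) ℝ))ᵀ = 1 := by
  refine ⟨?_, ?_, ?_⟩
  · have := hA.spectral_theorem
    rw [RCLike.ofReal_real_eq_id] at this
    simpa [Matrix.star_eq_conjTranspose, Matrix.conjTranspose_eq_transpose_of_trivial] using this
  · have h := (Matrix.mem_unitaryGroup_iff'.mp hA.eigenvectorUnitary.2)
    rwa [Matrix.star_eq_conjTranspose, Matrix.conjTranspose_eq_transpose_of_trivial] at h
  · have h := (Matrix.mem_unitaryGroup_iff.mp hA.eigenvectorUnitary.2)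
    rwa [Matrix.star_eq_conjTranspose, Matrix.conjTranspose_eq_transpose_of_trivial] at h

end CLAux

set_option maxHeartbeats 2000000 in
theorem stmt_7 (N : ℕ)
    (P Q : Matrix (Fin N) (Fin N) ℝ) (hP : P.PosSemidef) (hQ : Q.PosSemidef)
    (hcol : LinearMap.range P.mulVecLin ≤ LinearMap.range Q.mulVecLin)
    (Qd : Matrix (Fin N) (Fin N) ℝ) (hQd : IsPseudoinverse Q Qd) :
    (∃ (S : Matrix (Fin N) (Fin N) ℝ) (lam : Fin N → ℝ), IsUnit S.det ∧
      (∀ i, 0 ≤ lam i) ∧ Qd * P = S * Matrix.diagonal lam * S⁻¹) ∧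
    (∀ lam : Fin N → ℝ, Antitone lam → (∀ i, 0 ≤ lam i) →
      (∃ S : Matrix (Fin N) (Fin N) ℝ, IsUnit S.det ∧
        Qd * P = S * Matrix.diagonal lam * S⁻¹) →
      ∀ p : ℕ, 1 ≤ p →
        ∃ W : Matrix (Fin p) (Fin N) ℝ,
          (∀ W' : Matrix (Fin p) (Fin N) ℝ, CLTraceLoss P Q W ≤ CLTraceLoss P Q W') ∧
          CLTraceLoss P Q W = -(∑ i : Fin N, if (i : ℕ) < p then lam i ^ 2 else 0)) := by
  classical
  obtain ⟨hq1, hq2, hq3, hq4⟩ := hQd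
  have hQH : Q.IsHermitian := hQ.isHermitian
  obtain ⟨hspec, hU1, hU2⟩ := CLAux.spec_real Q hQH
  set U : Matrix (Fin N) (Fin N) ℝ := (hQH.eigenvectorUnitary : Matrix (Fin N) (Fin N) ℝ) with hU
  set e : Fin N → ℝ := hQH.eigenvalues with he
  have he0 : ∀ i, 0 ≤ e i := fun i => hQ.eigenvalues_nonneg i
  -- scalar functions
  set sq : Fin N → ℝ := fun i => Real.sqrt (e i) with hsq
  set sqd : Fin N → ℝ := fun i => if e i = 0 then 0 else (Real.sqrt (e i))⁻¹ with hsqd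
  set ed : Fin N → ℝ := fun i => if e i = 0 then 0 else (e i)⁻¹ with hed
  set ind : Fin N → ℝ := fun i => if e i = 0 then 0 else 1 with hind
  set R : Matrix (Fin N) (Fin N) ℝ := U * diagonal sq * Uᵀ with hRdef
  set Rd : Matrix (Fin N) (Fin N) ℝ := U * diagonal sqd * Uᵀ with hRddef
  set Qd' : Matrix (Fin N) (Fin N) ℝ := U * diagonal ed * Uᵀ with hQddef
  set Pg : Matrix (Fin N) (Fin N) ℝ := U * diagonal ind * Uᵀ with hPgdef
  have mulU := CLAux.UDU_mul U hU1
  -- pointwise function identities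
  have hsqrt_ne : ∀ i, e i ≠ 0 → Real.sqrt (e i) ≠ 0 := by
    intro i hi
    exact Real.sqrt_ne_zero'.mpr (lt_of_le_of_ne (he0 i) (Ne.symm hi))
  have f1 : (fun i => sq i * sq i) = e := by
    funext i; exact Real.mul_self_sqrt (he0 i)
  have f2 : (fun i => sq i * sqd i) = ind := by
    funext i; by_cases hi : e i = 0
    · simp [hsq, hsqd, hind, hi]
    · simp only [hsq, hsqd, hind, if_neg hi]
      exact mul_inv_cancel₀ (hsqrt_ne i hi)
  have f3 : (fun i => sqd i * sq i) = ind := by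
    funext i; by_cases hi : e i = 0
    · simp [hsq, hsqd, hind, hi]
    · simp only [hsq, hsqd, hind, if_neg hi]
      exact inv_mul_cancel₀ (hsqrt_ne i hi)
  have f4 : (fun i => sqd i * sqd i) = ed := by
    funext i; by_cases hi : e i = 0
    · simp [hsq, hsqd, hed, hi]
    · simp only [hsq, hsqd, hed, if_neg hi]
      rw [← mul_inv, Real.mul_self_sqrt (he0 i)]
  have f5 : (fun i => ind i * sq i) = sq := by
    funext i; by_cases hi : e i = 0 <;> simp [hsq, hind, hi]
  have f6 : (fun i => sq i * ind i) = sq := by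
    funext i; by_cases hi : e i = 0 <;> simp [hsq, hind, hi]
  have f7 : (fun i => ind i * sqd i) = sqd := by
    funext i; by_cases hi : e i = 0 <;> simp [hsqd, hind, hi]
  have f9 : (fun i => e i * ed i) = ind := by
    funext i; by_cases hi : e i = 0
    · simp [hed, hind, hi]
    · simp only [hed, hind, if_neg hi]
      exact mul_inv_cancel₀ hi
  have f10 : (fun i => ed i * e i) = ind := by
    funext i; by_cases hi : e i = 0
    · simp [hed, hind, hi]
    · simp only [hed, hind, if_neg hi]
      exact inv_mul_cancel₀ hi
  have f11 : (fun i => ind i * e i) = e := by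
    funext i; by_cases hi : e i = 0 <;> simp [hind, hi]
  have f12 : (fun i => ind i * ed i) = ed := by
    funext i; by_cases hi : e i = 0 <;> simp [hed, hind, hi]
  -- matrix relations
  have hRR : R * R = Q := by rw [hRdef, mulU, f1, ← hspec]
  have hRRd : R * Rd = Pg := by rw [hRdef, hRddef, mulU, f2]
  have hRdR : Rd * R = Pg := by rw [hRdef, hRddef, mulU, f3]
  have hRdRd : Rd * Rd = Qd' := by rw [hRddef, hQddef, mulU, f4]
  have hPgR : Pg * R = R := by rw [hRdef, hPgdef, mulU, f5]
  have hRPg : R * Pg = R := by rw [hRdef, hPgdef, mulU, f6]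
  have hPgRd : Pg * Rd = Rd := by rw [hRddef, hPgdef, mulU, f7]
  have hQQd : Q * Qd' = Pg := by rw [hspec, hQddef, hPgdef, mulU, f9]
  have hQdQ : Qd' * Q = Pg := by rw [hspec, hQddef, hPgdef, mulU, f10]
  have hPgQ : Pg * Q = Q := by rw [hspec, hPgdef, mulU, f11]
  have hPgQd : Pg * Qd' = Qd' := by rw [hQddef, hPgdef, mulU, f12]
  have hRT : Rᵀ = R := CLAux.UDU_T U sq
  have hRdT : Rdᵀ = Rd := CLAux.UDU_T U sqd
  have hPgT : Pgᵀ = Pg := CLAux.UDU_T U ind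
  have hPT : Pᵀ = P := by
    rw [← Matrix.conjTranspose_eq_transpose_of_trivial]; exact hP.isHermitian
  -- Qd = Qd'
  have hQdeq : Qd = Qd' := by
    apply CLAux.pinv_unique Q Qd Qd' hq1 hq2 hq3 hq4
    · rw [hQQd, hPgQ]
    · rw [hQdQ, hPgQd]
    · rw [hQQd, hPgT]
    · rw [hQdQ, hPgT]
  -- column space
  have hPgP : Pg * P = P := by
    have hcols : ∀ v, Pg *ᵥ (P *ᵥ v) = P *ᵥ v := by
      intro v
      obtain ⟨y, hy⟩ := hcol (LinearMap.mem_range_self P.mulVecLin v)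
      simp only [Matrix.mulVecLin_apply] at hy
      rw [← hy, Matrix.mulVec_mulVec, hPgQ]
    ext i j
    have h := congrFun (hcols (Pi.single j 1)) i
    rw [Matrix.mulVec_mulVec] at h
    simpa [Matrix.mulVec_single] using h
  have hPPg : P * Pg = P := by
    have := congrArg Matrix.transpose hPgP
    rwa [transpose_mul, hPgT, hPT] at this
  -- the key symmetric matrix
  set Mmat : Matrix (Fin N) (Fin N) ℝ := Rd * P * Rd with hMmatdef
  have hMps : Mmat.PosSemidef := by
    have := hP.mul_mul_conjTranspose_same Rd
    rwa [Matrix.conjTranspose_eq_transpose_of_trivial, hRdT] at this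
  have hMH : Mmat.IsHermitian := hMps.isHermitian
  obtain ⟨hMspec, hUM1, hUM2⟩ := CLAux.spec_real Mmat hMH
  set UM : Matrix (Fin N) (Fin N) ℝ := (hMH.eigenvectorUnitary : Matrix (Fin N) (Fin N) ℝ)
    with hUMdef
  set eig : Fin N → ℝ := hMH.eigenvalues with heig
  have heig0 : ∀ i, 0 ≤ eig i := fun i => hMps.eigenvalues_nonneg i
  have mulUM := CLAux.UDU_mul UM hUM1
  have hPgM : Pg * Mmat = Mmat := by
    rw [hMmatdef]
    calc Pg * (Rd * P * Rd) = (Pg * Rd) * P * Rd := by simp only [mul_assoc]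
    _ = Rd * P * Rd := by rw [hPgRd]
  have hMT : Mmatᵀ = Mmat := by
    rw [← Matrix.conjTranspose_eq_transpose_of_trivial]; exact hMH
  have hMPg : Mmat * Pg = Mmat := by
    have := congrArg Matrix.transpose hPgM
    rwa [transpose_mul, hPgT, hMT] at this
  have f8 : (fun i => ind i * ind i) = ind := by
    funext i; by_cases hi : e i = 0 <;> simp [hind, hi]
  have f13 : (fun i => sqd i * ind i) = sqd := by
    funext i; by_cases hi : e i = 0 <;> simp [hsqd, hind, hi]
  have hPgPg : Pg * Pg = Pg := by rw [hPgdef, mulU, f8]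
  have hRdPg : Rd * Pg = Rd := by rw [hPgdef, hRddef, mulU, f13]
  have hPgUD : Pg * (UM * diagonal eig) = UM * diagonal eig := by
    have h := hPgM
    rw [hMspec] at h
    have h2 := congrArg (fun A => A * UM) h
    simp only [mul_assoc] at h2 ⊢
    rwa [hUM1, mul_one] at h2
  -- invertible bridge matrices
  set FQ : Matrix (Fin N) (Fin N) ℝ := R + (1 - Pg) with hFQdef
  set GQ : Matrix (Fin N) (Fin N) ℝ := Rd + (1 - Pg) with hGQdef
  have hA1 : R * (1 - Pg) = 0 := by rw [mul_sub, mul_one, hRPg, sub_self]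
  have hA2 : (1 - Pg) * Rd = 0 := by rw [sub_mul, one_mul, hPgRd, sub_self]
  have hA3 : (1 - Pg) * (1 - Pg) = 1 - Pg := by
    rw [mul_sub, mul_one, sub_mul, one_mul, hPgPg, sub_self, sub_zero]
  have hA4 : Rd * (1 - Pg) = 0 := by rw [mul_sub, mul_one, hRdPg, sub_self]
  have hA5 : (1 - Pg) * R = 0 := by rw [sub_mul, one_mul, hPgR, sub_self]
  have hFG : FQ * GQ = 1 := by
    rw [hFQdef, hGQdef, add_mul, mul_add, mul_add, hRRd, hA1, hA2, hA3, add_zero, zero_add]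
    abel
  have hGF : GQ * FQ = 1 := by
    rw [hFQdef, hGQdef, add_mul, mul_add, mul_add, hRdR, hA4, hA5, hA3, add_zero, zero_add]
    abel
  set S0 : Matrix (Fin N) (Fin N) ℝ := GQ * UM with hS0def
  have hS0right : S0 * (UMᵀ * FQ) = 1 := by
    rw [hS0def]
    calc GQ * UM * (UMᵀ * FQ) = GQ * (UM * UMᵀ) * FQ := by simp only [mul_assoc]
    _ = GQ * FQ := by rw [hUM2, mul_one]
    _ = 1 := hGF
  have hS0det : IsUnit S0.det := Matrix.isUnit_det_of_right_inverse hS0right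
  have hS0inv : S0⁻¹ = UMᵀ * FQ := Matrix.inv_eq_right_inv hS0right
  have hMF : Mmat * FQ = Rd * P := by
    rw [hMmatdef, hFQdef, mul_add]
    have e1 : Rd * P * Rd * R = Rd * P := by
      rw [mul_assoc, hRdR, mul_assoc, hPPg]
    have e2 : Rd * P * Rd * (1 - Pg) = 0 := by
      rw [mul_assoc, mul_assoc, hA4, mul_zero, mul_zero]
    rw [e1, e2, add_zero]
  have hGRd : GQ * Rd = Qd' := by
    rw [hGQdef, add_mul, hRdRd, hA2, add_zero]
  have hQdP : Qd * P = S0 * diagonal eig * S0⁻¹ := by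
    rw [hQdeq, hS0inv, hS0def]
    calc Qd' * P = GQ * Rd * P := by rw [hGRd]
    _ = GQ * (Mmat * FQ) := by rw [hMF, mul_assoc]
    _ = GQ * (UM * diagonal eig * UMᵀ * FQ) := by rw [← hMspec]
    _ = GQ * UM * diagonal eig * (UMᵀ * FQ) := by simp only [mul_assoc]
  constructor
  · exact ⟨S0, eig, hS0det, heig0, hQdP⟩
  intro lam hAnti hlam0 hex p hp
  obtain ⟨S, hSdet, hSP⟩ := hex
  have hchar : (diagonal lam).charpoly = (diagonal eig).charpoly := by
    have h1 := CLAux.charpoly_conj S (diagonal lam) hSdet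
    have h2 := CLAux.charpoly_conj S0 (diagonal eig) hS0det
    rw [← hSP] at h1
    rw [← hQdP] at h2
    rw [← h1, ← h2]
  have hms := CLAux.multiset_eq_of_charpoly lam eig hchar
  obtain ⟨τ, hτ⟩ := CLAux.exists_perm_comp lam eig hAnti hms
  have hlamτ : ∀ k, lam (τ k) = eig k := fun k => congrFun hτ k
  -- general loss formula
  have lossEq : ∀ (W' : Matrix (Fin p) (Fin N) ℝ),
      CLTraceLoss P Q W' = trace ((R * (W'ᵀ * W') * R) * (R * (W'ᵀ * W') * R))
        - 2 * trace ((R * (W'ᵀ * W') * R) * Mmat) := by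
    intro W'
    unfold CLTraceLoss
    rw [trace_add, trace_smul, smul_eq_mul]
    have hPfact : P = R * Mmat * R := by
      rw [hMmatdef]
      calc P = Pg * P * Pg := by rw [hPgP, hPPg]
      _ = (R * Rd) * P * (Rd * R) := by rw [hRRd, hRdR]
      _ = R * (Rd * P * Rd) * R := by simp only [mul_assoc]
    set Nm := W'ᵀ * W' with hNm
    have ht1 : trace (Nm * P) = trace ((R * Nm * R) * Mmat) := by
      conv_lhs => rw [hPfact]
      rw [show Nm * (R * Mmat * R) = (Nm * (R * Mmat)) * R by simp only [mul_assoc]]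
      rw [trace_mul_comm]
      rw [show R * (Nm * (R * Mmat)) = (R * Nm * R) * Mmat by simp only [mul_assoc]]
    have ht2 : trace (Nm * Q * Nm * Q) = trace ((R * Nm * R) * (R * Nm * R)) := by
      rw [← hRR]
      rw [show Nm * (R * R) * Nm * (R * R) = (Nm * (R * R) * (Nm * R)) * R by
        simp only [mul_assoc]]
      rw [trace_mul_comm]
      rw [show R * (Nm * (R * R) * (Nm * R)) = (R * Nm * R) * (R * Nm * R) by
        simp only [mul_assoc]]
    rw [ht1, ht2]
    ring
  -- diagonal selector functions
  set dh : Fin N → ℝ := fun k => if (τ k : ℕ) < p then Real.sqrt (eig k) else 0 with hdh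
  set d2 : Fin N → ℝ := fun k => if (τ k : ℕ) < p then eig k else 0 with hd2
  set dind : Fin N → ℝ := fun k => if (τ k : ℕ) < p then (1:ℝ) else 0 with hdind
  -- selection matrix
  set K : Matrix (Fin p) (Fin N) ℝ :=
    Matrix.of (fun a k => if (τ k : ℕ) = (a : ℕ) then 1 else 0) with hKdef
  have hKK : Kᵀ * K = diagonal dind := by
    ext k k'
    rw [Matrix.mul_apply]
    by_cases hkk : k = k'
    · subst hkk
      rw [Matrix.diagonal_apply_eq]
      simp only [hdind]
      have hterm : ∀ a : Fin p, Kᵀ k a * K a k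
          = if (τ k : ℕ) = (a : ℕ) then (1:ℝ) else 0 := by
        intro a
        simp only [Matrix.transpose_apply, hKdef, Matrix.of_apply]
        by_cases h : (τ k : ℕ) = (a : ℕ)
        · simp [h]
        · simp [h]
      rw [Finset.sum_congr rfl fun a _ => hterm a]
      by_cases hk : (τ k : ℕ) < p
      · rw [if_pos hk, Finset.sum_eq_single (⟨(τ k : ℕ), hk⟩ : Fin p)]
        · simp
        · intro b _ hb
          rw [if_neg]
          intro hcon
          exact hb (by apply Fin.ext; exact hcon.symm)
        · intro h; exact absurd (Finset.mem_univ _) h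
      · rw [if_neg hk]
        apply Finset.sum_eq_zero
        intro a _
        rw [if_neg]
        intro hcon
        exact hk (hcon ▸ a.2)
    · rw [Matrix.diagonal_apply_ne _ hkk]
      apply Finset.sum_eq_zero
      intro a _
      simp only [Matrix.transpose_apply, hKdef, Matrix.of_apply]
      by_cases h1 : (τ k : ℕ) = (a : ℕ)
      · by_cases h2 : (τ k' : ℕ) = (a : ℕ)
        · exfalso
          apply hkk
          exact τ.injective (Fin.ext (h1.trans h2.symm))
        · simp [Matrix.of_apply, h2]
      · simp [Matrix.of_apply, h1]
  -- pointwise identity dh * dind * dh = d2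
  have fdh : (fun k => dh k * dind k * dh k) = d2 := by
    funext k
    by_cases hk : (τ k : ℕ) < p
    · simp only [hdh, hdind, hd2, if_pos hk, mul_one]
      exact Real.mul_self_sqrt (heig0 k)
    · simp [hdh, hdind, hd2, if_neg hk]
  -- the candidate minimizer
  set W : Matrix (Fin p) (Fin N) ℝ := K * diagonal dh * UMᵀ * Rd with hWdef
  have hWT : Wᵀ = Rd * (UM * (diagonal dh * Kᵀ)) := by
    rw [hWdef]
    simp only [transpose_mul, transpose_transpose, diagonal_transpose, hRdT, Matrix.mul_assoc]
  have hWW : Wᵀ * W = Rd * (UM * diagonal d2 * UMᵀ) * Rd := by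
    rw [hWT, hWdef]
    have : Rd * (UM * (diagonal dh * Kᵀ)) * (K * diagonal dh * UMᵀ * Rd)
        = Rd * (UM * (diagonal dh * (Kᵀ * K) * diagonal dh) * UMᵀ) * Rd := by
      simp only [Matrix.mul_assoc]
    rw [this, hKK]
    have h2 : diagonal dh * diagonal dind * diagonal dh = diagonal d2 := by
      rw [diagonal_mul_diagonal, diagonal_mul_diagonal, ← fdh]
    rw [h2]
  -- Pg absorbs UM * diagonal d2
  have hPgUD2 : Pg * (UM * diagonal d2) = UM * diagonal d2 := by
    set dsel : Fin N → ℝ := fun k =>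
      if (τ k : ℕ) < p then (if eig k = 0 then 0 else 1) else 0 with hdsel
    have hfun : (fun k => eig k * dsel k) = d2 := by
      funext k
      by_cases hk : (τ k : ℕ) < p
      · by_cases hek : eig k = 0
        · simp [hd2, hdsel, hk, hek]
        · simp [hd2, hdsel, hk, hek]
      · simp [hd2, hdsel, hk]
    have hsplit : diagonal d2 = diagonal eig * diagonal dsel := by
      rw [diagonal_mul_diagonal, hfun]
    rw [hsplit]
    calc Pg * (UM * (diagonal eig * diagonal dsel))
        = Pg * (UM * diagonal eig) * diagonal dsel := by simp only [mul_assoc]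
    _ = UM * diagonal eig * diagonal dsel := by rw [hPgUD]
    _ = UM * (diagonal eig * diagonal dsel) := by simp only [mul_assoc]
  have hstep1 : Pg * (UM * diagonal d2 * UMᵀ) = UM * diagonal d2 * UMᵀ := by
    calc Pg * (UM * diagonal d2 * UMᵀ) = (Pg * (UM * diagonal d2)) * UMᵀ := by
          simp only [mul_assoc]
    _ = UM * diagonal d2 * UMᵀ := by rw [hPgUD2]
  have hstep2 : (UM * diagonal d2 * UMᵀ) * Pg = UM * diagonal d2 * UMᵀ := by
    have h := congrArg Matrix.transpose hstep1
    rwa [transpose_mul, hPgT, CLAux.UDU_T] at h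
  have hXW : R * (Wᵀ * W) * R = UM * diagonal d2 * UMᵀ := by
    rw [hWW]
    have : R * (Rd * (UM * diagonal d2 * UMᵀ) * Rd) * R
        = (R * Rd) * (UM * diagonal d2 * UMᵀ) * (Rd * R) := by simp only [mul_assoc]
    rw [this, hRRd, hRdR]
    rw [show Pg * (UM * diagonal d2 * UMᵀ) * Pg
        = (Pg * (UM * diagonal d2 * UMᵀ)) * Pg from rfl, hstep1, hstep2]
  -- value of the loss at W
  have hvalue : CLTraceLoss P Q W = -(∑ i : Fin N, if (i : ℕ) < p then lam i ^ 2 else 0) := by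
    rw [lossEq W, hXW]
    rw [CLAux.UDU_mul UM hUM1 d2 d2]
    rw [CLAux.UDU_trace UM hUM1]
    rw [hMspec]
    rw [CLAux.UDU_mul UM hUM1 d2 eig]
    rw [CLAux.UDU_trace UM hUM1]
    have hpt : ∀ k : Fin N, d2 k * d2 k = (if ((τ k : ℕ)) < p then lam (τ k) ^ 2 else 0) := by
      intro k
      by_cases hk : (τ k : ℕ) < p
      · simp only [hd2, if_pos hk, hlamτ k]; ring
      · simp [hd2, if_neg hk]
    have hpt2 : ∀ k : Fin N, d2 k * eig k = (if ((τ k : ℕ)) < p then lam (τ k) ^ 2 else 0) := by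
      intro k
      by_cases hk : (τ k : ℕ) < p
      · simp only [hd2, if_pos hk, hlamτ k]; ring
      · simp [hd2, if_neg hk]
    rw [Finset.sum_congr rfl fun k _ => hpt k, Finset.sum_congr rfl fun k _ => hpt2 k]
    rw [show (∑ k : Fin N, if ((τ k : ℕ)) < p then lam (τ k) ^ 2 else 0)
        = ∑ j : Fin N, (if (j : ℕ) < p then lam j ^ 2 else 0) from
      Equiv.sum_comp τ (fun j => if (j : ℕ) < p then lam j ^ 2 else 0)]
    ring
  -- lower bound for an arbitrary W'
  have lower : ∀ (W' : Matrix (Fin p) (Fin N) ℝ),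
      -(∑ i : Fin N, if (i : ℕ) < p then lam i ^ 2 else 0) ≤ CLTraceLoss P Q W' := by
    intro W'
    rw [lossEq W']
    set Nm := W'ᵀ * W' with hNm
    set X' : Matrix (Fin N) (Fin N) ℝ := R * Nm * R with hX'
    have hX'sym : X' = (W' * R)ᵀ * (W' * R) := by
      rw [hX', transpose_mul, hRT, hNm]
      simp only [Matrix.mul_assoc]
    have hX'ps : X'.PosSemidef := by
      rw [hX'sym]
      have h := Matrix.posSemidef_conjTranspose_mul_self (W' * R)
      rwa [Matrix.conjTranspose_eq_transpose_of_trivial] at h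
    have hX'H : X'.IsHermitian := hX'ps.isHermitian
    obtain ⟨hX'spec, hV1, hV2⟩ := CLAux.spec_real X' hX'H
    set V : Matrix (Fin N) (Fin N) ℝ := (hX'H.eigenvectorUnitary : Matrix (Fin N) (Fin N) ℝ)
      with hVdef
    set nu : Fin N → ℝ := hX'H.eigenvalues with hnu
    have hnu0 : ∀ j, 0 ≤ nu j := fun j => hX'ps.eigenvalues_nonneg j
    -- rank bound
    have hrank : Fintype.card {j // nu j ≠ 0} ≤ p := by
      have h1 : X'.rank = (W' * R).rank := by
        rw [hX'sym]; exact Matrix.rank_transpose_mul_self _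
      have h2 : (W' * R).rank ≤ p := by
        have := Matrix.rank_le_card_height (W' * R)
        simpa using this
      have h3 := hX'H.rank_eq_card_non_zero_eigs
      rw [← h3, h1]
      exact h2
    set G : Matrix (Fin N) (Fin N) ℝ := Vᵀ * UM with hGdef
    have hGGt : G * Gᵀ = 1 := by
      rw [hGdef, transpose_mul, transpose_transpose]
      calc Vᵀ * UM * (UMᵀ * V) = Vᵀ * (UM * UMᵀ) * V := by simp only [mul_assoc]
      _ = Vᵀ * V := by rw [hUM2, mul_one]
      _ = 1 := hV1
    have hGtG : Gᵀ * G = 1 := by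
      rw [hGdef, transpose_mul, transpose_transpose]
      calc UMᵀ * V * (Vᵀ * UM) = UMᵀ * (V * Vᵀ) * UM := by simp only [mul_assoc]
      _ = UMᵀ * UM := by rw [hV2, mul_one]
      _ = 1 := hUM1
    have hrow : ∀ j, ∑ i, (G j i) ^ 2 = 1 := by
      intro j
      have h : (G * Gᵀ) j j = (1 : Matrix (Fin N) (Fin N) ℝ) j j := by rw [hGGt]
      rw [Matrix.mul_apply, Matrix.one_apply_eq] at h
      calc ∑ i, (G j i) ^ 2 = ∑ i, G j i * Gᵀ i j := by
            apply Finset.sum_congr rfl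
            intro i _
            rw [Matrix.transpose_apply, pow_two]
      _ = 1 := h
    have hcolG : ∀ i, ∑ j, (G j i) ^ 2 = 1 := by
      intro i
      have h : (Gᵀ * G) i i = (1 : Matrix (Fin N) (Fin N) ℝ) i i := by rw [hGtG]
      rw [Matrix.mul_apply, Matrix.one_apply_eq] at h
      calc ∑ j, (G j i) ^ 2 = ∑ j, Gᵀ i j * G j i := by
            apply Finset.sum_congr rfl
            intro j _
            rw [Matrix.transpose_apply, pow_two]
      _ = 1 := h
    set m : Fin N → ℝ := fun j => ∑ i, (G j i) ^ 2 * eig i with hm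
    -- trace computations
    have htr1 : trace (X' * X') = ∑ j, nu j * nu j := by
      rw [hX'spec, CLAux.UDU_mul V hV1, CLAux.UDU_trace V hV1]
    have htr2 : trace (X' * Mmat) = ∑ j, nu j * m j := by
      rw [hX'spec, hMspec]
      rw [show (V * diagonal nu * Vᵀ) * (UM * diagonal eig * UMᵀ)
          = V * (diagonal nu * (Vᵀ * (UM * (diagonal eig * UMᵀ)))) by simp only [mul_assoc]]
      rw [trace_mul_comm]
      rw [show (diagonal nu * (Vᵀ * (UM * (diagonal eig * UMᵀ)))) * V
          = diagonal nu * (G * diagonal eig * Gᵀ) by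
        rw [hGdef, transpose_mul, transpose_transpose]
        simp only [mul_assoc]]
      rw [CLAux.trace_diag_mul]
      apply Finset.sum_congr rfl
      intro j _
      congr 1
      rw [Matrix.mul_apply, hm]
      apply Finset.sum_congr rfl
      intro i _
      rw [Matrix.mul_diagonal, Matrix.transpose_apply, pow_two]
      ring
    rw [htr1, htr2]
    -- pointwise inequality
    have hptj : ∀ j, -(if nu j ≠ 0 then m j ^ 2 else 0) ≤ nu j * nu j - 2 * (nu j * m j) := by
      intro j
      by_cases hj : nu j = 0
      · simp [hj]
      · rw [if_pos hj]
        nlinarith [sq_nonneg (nu j - m j)]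
    have hsum1 : ∑ j, -(if nu j ≠ 0 then m j ^ 2 else 0)
        ≤ ∑ j, (nu j * nu j - 2 * (nu j * m j)) := Finset.sum_le_sum fun j _ => hptj j
    set s : Finset (Fin N) := Finset.univ.filter (fun j => nu j ≠ 0) with hs
    have hcards : (s.card : ℝ) ≤ (p : ℝ) := by
      have := Fintype.card_subtype (fun j => nu j ≠ 0)
      rw [this] at hrank
      exact_mod_cast hrank
    have hLHS : ∑ j, -(if nu j ≠ 0 then m j ^ 2 else 0) = -(∑ j ∈ s, m j ^ 2) := by
      rw [← Finset.sum_neg_distrib]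
      rw [hs, Finset.sum_filter]
      apply Finset.sum_congr rfl
      intro j _
      by_cases hj : nu j ≠ 0 <;> simp [hj]
    -- Cauchy-Schwarz per row
    have hmsq : ∀ j, m j ^ 2 ≤ ∑ i, (G j i) ^ 2 * eig i ^ 2 := by
      intro j
      rw [hm]
      exact CLAux.sq_sum_le (fun i => (G j i) ^ 2) eig (fun i => sq_nonneg _) (hrow j)
    set t : Fin N → ℝ := fun i => ∑ j ∈ s, (G j i) ^ 2 with ht
    have hsums : ∑ j ∈ s, m j ^ 2 ≤ ∑ i, t i * eig i ^ 2 := by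
      calc ∑ j ∈ s, m j ^ 2 ≤ ∑ j ∈ s, ∑ i, (G j i) ^ 2 * eig i ^ 2 :=
            Finset.sum_le_sum fun j _ => hmsq j
      _ = ∑ i, ∑ j ∈ s, (G j i) ^ 2 * eig i ^ 2 := Finset.sum_comm
      _ = ∑ i, t i * eig i ^ 2 := by
            apply Finset.sum_congr rfl
            intro i _
            rw [ht, Finset.sum_mul]
    have ht0 : ∀ i, 0 ≤ t i := fun i => Finset.sum_nonneg fun j _ => sq_nonneg _
    have ht1 : ∀ i, t i ≤ 1 := by
      intro i
      rw [ht]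
      calc ∑ j ∈ s, (G j i) ^ 2 ≤ ∑ j, (G j i) ^ 2 :=
            Finset.sum_le_sum_of_subset_of_nonneg (Finset.filter_subset _ _)
              (fun j _ _ => sq_nonneg _)
      _ = 1 := hcolG i
    have htsum : ∑ i, t i ≤ (p : ℝ) := by
      have : ∑ i, t i = (s.card : ℝ) := by
        rw [ht]
        rw [Finset.sum_comm]
        rw [Finset.sum_congr rfl fun j _ => hrow j]
        simp
      rw [this]
      exact hcards
    -- reindex by τ and apply the weight inequality
    have hfin : ∑ i, t i * eig i ^ 2 ≤ ∑ i : Fin N, if (i : ℕ) < p then lam i ^ 2 else 0 := by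
      have hre : ∑ i, t i * eig i ^ 2 = ∑ i, t (τ.symm i) * lam i ^ 2 := by
        rw [← Equiv.sum_comp τ (fun i => t (τ.symm i) * lam i ^ 2)]
        apply Finset.sum_congr rfl
        intro k _
        rw [Equiv.symm_apply_apply, hlamτ k]
      rw [hre]
      apply CLAux.sum_weight_le (fun i => lam i ^ 2) ?_ (fun i => sq_nonneg _)
        (fun i => t (τ.symm i)) (fun i => ht0 _) (fun i => ht1 _) ?_
      · intro i j hij
        exact pow_le_pow_left₀ (hlam0 j) (hAnti hij) 2
      · rw [Equiv.sum_comp τ.symm t]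
        exact htsum
    have hchain : -(∑ i : Fin N, if (i : ℕ) < p then lam i ^ 2 else 0) ≤ -(∑ j ∈ s, m j ^ 2) := by
      have := le_trans hsums hfin
      linarith
    have hfinal : ∑ j, (nu j * nu j - 2 * (nu j * m j))
        = ∑ j, nu j * nu j - 2 * ∑ j, (nu j * m j) := by
      rw [Finset.sum_sub_distrib, Finset.mul_sum]
    calc -(∑ i : Fin N, if (i : ℕ) < p then lam i ^ 2 else 0)
        ≤ -(∑ j ∈ s, m j ^ 2) := hchain
    _ ≤ ∑ j, (nu j * nu j - 2 * (nu j * m j)) := by rw [← hLHS]; exact hsum1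
    _ = ∑ j, nu j * nu j - 2 * ∑ j, (nu j * m j) := hfinal
  refine ⟨W, ?_, hvalue⟩
  intro W'
  rw [hvalue]
  exact lower W'
end
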